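/- Let p be a prime, q a prime power coprime to p, and i ≥ 1. Let d be the multiplicative order of q^i modulo p^n for n ≥ 1 (equivalently, the degree of the extension of 𝔽_q generated by the i-th Tate twist of μ_{p^n}). The group G = ℤ/d acting on M = ℤ/p^n by multiplication by q^i is a faithful cyclic action, and if p is odd (or p = 2 and q^i ≢ −1 mod p^n with d ≠ 2 acting by −1), the norm map M_G → M^G, given by multiplication by 1 + q^i + q^{2i} + ⋯ + q^{(d−1)i}, is surjective onto M^G = {m : (q^i − 1)m = 0}. -/

import Mathlib

open Finset

private lemma aux_norm (p n A d e c : ℕ) (hp : p.Prime) (hn : 1 ≤ n) (hA : 2 ≤ A)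
    (hc1 : 1 ≤ c) (hcn : c < n)
    (hdpow : (A : ZMod (p ^ n)) ^ d = 1)
    (hdmin : ∀ k : ℕ, k ≠ 0 → (A : ZMod (p ^ n)) ^ k = 1 → d ∣ k)
    (hAne : (A : ZMod (p ^ n)) ≠ 1)
    (hLTE : ∀ N : ℕ, N ≠ 0 → (p = 2 → Even N) →
      padicValNat p (A ^ N - 1) = c + padicValNat p N)
    (hee : e = padicValNat p (A - 1)) (hen : e ≤ n) :
    ∀ m : ZMod (p ^ n), ((A : ZMod (p ^ n)) - 1) * m = 0 →
      ∃ x, ((∑ j ∈ Finset.range d, A ^ j : ℕ) : ZMod (p ^ n)) * x = m := by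
  haveI : Fact p.Prime := ⟨hp⟩
  haveI : NeZero (p ^ n) := ⟨pow_ne_zero n hp.ne_zero⟩
  have hp1 : 1 < p := hp.one_lt
  -- Step 1 : d divides p ^ (n - c)
  have hNne : p ^ (n - c) ≠ 0 := pow_ne_zero _ hp.ne_zero
  have hNeven : p = 2 → Even (p ^ (n - c)) := by
    intro h2; subst h2
    exact (Nat.even_pow).mpr ⟨even_two, by omega⟩
  have hANne : ∀ N : ℕ, N ≠ 0 → A ^ N - 1 ≠ 0 := by
    intro N hN
    have : 1 < A ^ N := Nat.one_lt_pow hN (by omega)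
    omega
  have hv1 : padicValNat p (A ^ (p ^ (n - c)) - 1) = n := by
    rw [hLTE _ hNne hNeven, padicValNat.prime_pow]; omega
  have hdvd1 : p ^ n ∣ A ^ (p ^ (n - c)) - 1 := by
    rw [padicValNat_dvd_iff_le (hANne _ hNne), hv1]
  have hcast : ∀ N : ℕ, p ^ n ∣ A ^ N - 1 ↔ (A : ZMod (p ^ n)) ^ N = 1 := by
    intro N
    rw [← ZMod.natCast_eq_zero_iff]
    have h1 : 1 ≤ A ^ N := Nat.one_le_pow _ _ (by omega)
    rw [Nat.cast_sub h1]
    push_cast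
    rw [sub_eq_zero]
  have hddvd : d ∣ p ^ (n - c) := hdmin _ hNne ((hcast _).mp hdvd1)
  obtain ⟨k, hk, hdk⟩ := (Nat.dvd_prime_pow hp).mp hddvd
  have hd0 : d ≠ 0 := by rw [hdk]; exact pow_ne_zero _ hp.ne_zero
  have hk1 : 1 ≤ k := by
    rcases Nat.eq_zero_or_pos k with h | h
    · exfalso; apply hAne
      have : d = 1 := by rw [hdk, h, pow_zero]
      rw [this, pow_one] at hdpow; exact hdpow
    · exact h
  have hdeven : p = 2 → Even d := by
    intro h2; rw [hdk, h2]
    exact (Nat.even_pow).mpr ⟨even_two, by omega⟩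
  have hdvdd : p ^ n ∣ A ^ d - 1 := (hcast _).mpr hdpow
  have hvd : padicValNat p (A ^ d - 1) = c + k := by
    rw [hLTE d hd0 hdeven, hdk, padicValNat.prime_pow]
  have hnck : n ≤ c + k := by
    rw [← hvd]
    exact (padicValNat_dvd_iff_le (hANne _ hd0)).mp hdvdd
  have hvdn : padicValNat p (A ^ d - 1) = n := by omega
  have hnd : ¬ p ^ (n + 1) ∣ A ^ d - 1 := by
    rw [padicValNat_dvd_iff_le (hANne _ hd0), hvdn]; omega
  -- decomposition of A - 1
  have hA1ne : A - 1 ≠ 0 := by omega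
  obtain ⟨b, hb⟩ : p ^ e ∣ A - 1 := hee ▸ pow_padicValNat_dvd
  have hpb : ¬ p ∣ b := by
    intro ⟨b', hb'⟩
    apply pow_succ_padicValNat_not_dvd (p := p) hA1ne
    rw [← hee, hb, hb', pow_succ]; ring_nf
    exact Dvd.intro b' (by ring)
  -- geometric sum
  have hgeom : (A - 1) * (∑ j ∈ Finset.range d, A ^ j) = A ^ d - 1 := by
    have h1 : 1 ≤ A := by omega
    have h2 : 1 ≤ A ^ d := Nat.one_le_pow _ _ (by omega)
    zify [h1, h2]
    push_cast
    rw [mul_comm]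
    exact geom_sum_mul _ _
  set S := ∑ j ∈ Finset.range d, A ^ j with hS
  have hpe : e + (n - e) = n := by omega
  have hSdvd : p ^ (n - e) ∣ b * S := by
    have h1 : p ^ e * p ^ (n - e) ∣ p ^ e * (b * S) := by
      rw [← pow_add, hpe, ← mul_assoc, ← hb, hgeom]; exact hdvdd
    exact (mul_dvd_mul_iff_left (pow_ne_zero e hp.ne_zero)).mp h1
  have hcopb : Nat.Coprime (p ^ (n - e)) b :=
    Nat.Coprime.pow_left _ ((hp.coprime_iff_not_dvd).mpr hpb)
  obtain ⟨w, hw⟩ : p ^ (n - e) ∣ S := hcopb.dvd_of_dvd_mul_left hSdvd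
  have hpw : ¬ p ∣ w := by
    intro ⟨w', hw'⟩
    apply hnd
    refine ⟨b * w', ?_⟩
    rw [← hgeom, hb, hw, hw']
    have hne : n + 1 = e + (n - e) + 1 := by omega
    rw [hne, pow_add, pow_add, pow_one]; ring
  -- now the main computation in ZMod (p ^ n)
  intro m hm
  have hsub : ((A - 1 : ℕ) : ZMod (p ^ n)) = (A : ZMod (p ^ n)) - 1 := by
    rw [Nat.cast_sub (by omega : 1 ≤ A)]; push_cast; ring
  have hbu : IsUnit ((b : ℕ) : ZMod (p ^ n)) := by
    rw [ZMod.isUnit_iff_coprime]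
    exact (((hp.coprime_iff_not_dvd).mpr hpb).symm).pow_right _
  have hpm : ((p : ZMod (p ^ n)) ^ e) * m = 0 := by
    have h1 : ((b : ℕ) : ZMod (p ^ n)) * (((p : ZMod (p ^ n)) ^ e) * m) = 0 := by
      have : ((A - 1 : ℕ) : ZMod (p ^ n)) * m = 0 := by rw [hsub]; exact hm
      rw [hb] at this; push_cast at this ⊢; linear_combination this
    exact (hbu.mul_right_eq_zero).mp h1
  have hmval : p ^ (n - e) ∣ m.val := by
    have h0 : ((p ^ e * m.val : ℕ) : ZMod (p ^ n)) = 0 := by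
      push_cast
      rw [ZMod.natCast_zmod_val]
      exact hpm
    have h1 : p ^ n ∣ p ^ e * m.val := (ZMod.natCast_eq_zero_iff _ _).mp h0
    have h2 : p ^ e * p ^ (n - e) ∣ p ^ e * m.val := by rw [← pow_add, hpe]; exact h1
    exact (mul_dvd_mul_iff_left (pow_ne_zero e hp.ne_zero)).mp h2
  obtain ⟨y, hy⟩ := hmval
  have hwcop : Nat.Coprime w (p ^ n) := (((hp.coprime_iff_not_dvd).mpr hpw).symm).pow_right _
  set wu := ZMod.unitOfCoprime w hwcop with hwu
  refine ⟨((wu⁻¹ : (ZMod (p ^ n))ˣ) : ZMod (p ^ n)) * (y : ZMod (p ^ n)), ?_⟩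
  have hwinv : ((w : ℕ) : ZMod (p ^ n)) * ((wu⁻¹ : (ZMod (p ^ n))ˣ) : ZMod (p ^ n)) = 1 := by
    rw [← ZMod.coe_unitOfCoprime w hwcop, ← hwu]
    exact_mod_cast wu.mul_inv
  calc ((S : ℕ) : ZMod (p ^ n)) * (((wu⁻¹ : (ZMod (p ^ n))ˣ) : ZMod (p ^ n)) * (y : ZMod (p ^ n)))
      = ((p : ZMod (p ^ n)) ^ (n - e) * (y : ZMod (p ^ n))) *
        (((w : ℕ) : ZMod (p ^ n)) * ((wu⁻¹ : (ZMod (p ^ n))ˣ) : ZMod (p ^ n))) := by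
        rw [hw]; push_cast; ring
    _ = ((p ^ (n - e) * y : ℕ) : ZMod (p ^ n)) := by rw [hwinv]; push_cast; ring
    _ = ((m.val : ℕ) : ZMod (p ^ n)) := by rw [← hy]
    _ = m := ZMod.natCast_zmod_val m

/-- Let `q` be coprime to the prime `p`, `n, i ≥ 1`, and let `d` be the multiplicative order
of `q^i` modulo `p^n`. The cyclic group `ℤ/d` acts faithfully on `M = ℤ/p^n` by
multiplication by `q^i`, and if `p` is odd (or `p = 2` and we are not in the case `d = 2`
acting by `−1`, i.e. `q^i ≡ −1`), the norm map `M_G → M^G`, given by multiplication by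
`1 + q^i + ⋯ + q^{(d−1)i}`, is surjective onto `M^G = {m : (q^i − 1)m = 0}`. -/
theorem stmt_13 (p q i n : ℕ) (hp : p.Prime) (hn : 1 ≤ n) (hi : 1 ≤ i)
    (hcop : Nat.Coprime (q ^ i) (p ^ n))
    (hexc : p ≠ 2 ∨
      ¬((q : ZMod (p ^ n)) ^ i = -1 ∧
        orderOf (ZMod.unitOfCoprime (q ^ i) hcop : (ZMod (p ^ n))ˣ) = 2)) :
    let d := orderOf (ZMod.unitOfCoprime (q ^ i) hcop : (ZMod (p ^ n))ˣ)
    -- the action by multiplication by `q^i` is faithful of order exactly `d`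
    (∀ j : ℕ, 0 < j → j < d → ((q : ZMod (p ^ n)) ^ i) ^ j ≠ 1) ∧
    -- surjectivity of the norm onto the invariants
    (∀ m : ZMod (p ^ n), ((q : ZMod (p ^ n)) ^ i - 1) * m = 0 →
      ∃ x : ZMod (p ^ n),
        (∑ j ∈ Finset.range d, ((q : ZMod (p ^ n)) ^ i) ^ j) * x = m) := by
  intro d
  haveI : Fact p.Prime := ⟨hp⟩
  haveI : NeZero (p ^ n) := ⟨pow_ne_zero n hp.ne_zero⟩
  have hpn1 : 1 < p ^ n := Nat.one_lt_pow (by omega) hp.one_lt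
  set u : (ZMod (p ^ n))ˣ := ZMod.unitOfCoprime (q ^ i) hcop with hu
  have hA : ((q : ZMod (p ^ n)) ^ i) = ((q ^ i : ℕ) : ZMod (p ^ n)) := by push_cast; ring
  have huv : (u : ZMod (p ^ n)) = ((q ^ i : ℕ) : ZMod (p ^ n)) :=
    ZMod.coe_unitOfCoprime _ _
  have hpow : ∀ k : ℕ, ((q ^ i : ℕ) : ZMod (p ^ n)) ^ k = 1 ↔ u ^ k = 1 := by
    intro k
    rw [← Units.val_eq_one, Units.val_pow_eq_pow_val, huv]
  constructor
  · intro j hj0 hjd h1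
    rw [hA] at h1
    have hdj : d ∣ j := orderOf_dvd_of_pow_eq_one ((hpow j).mp h1)
    have := Nat.le_of_dvd hj0 hdj
    omega
  · intro m hm
    rw [hA] at hm
    have hgoal : ∀ x : ZMod (p ^ n),
        (∑ j ∈ Finset.range d, ((q : ZMod (p ^ n)) ^ i) ^ j) * x
          = ((∑ j ∈ Finset.range d, (q ^ i) ^ j : ℕ) : ZMod (p ^ n)) * x := by
      intro x; rw [hA]; push_cast; ring
    set A := q ^ i with hAdef
    have hA1 : 1 ≤ A := by
      rcases Nat.eq_zero_or_pos A with h | h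
      · rw [h] at hcop
        simp [Nat.coprime_zero_left] at hcop
        have := hp.one_lt; omega
      · exact h
    have hpA : ¬ p ∣ A := by
      intro h
      have h1 : Nat.Coprime A p :=
        Nat.Coprime.coprime_dvd_right (dvd_pow_self p (by omega : n ≠ 0)) hcop
      exact (hp.coprime_iff_not_dvd.mp h1.symm) h
    by_cases ha1 : (A : ZMod (p ^ n)) = 1
    · have hu1 : u = 1 := by
        apply Units.ext
        rw [huv]; exact ha1
      have hd1 : d = 1 := by simp [d, ← hu, hu1]
      refine ⟨m, ?_⟩
      rw [hgoal, hd1]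
      simp
    · have hA2 : 2 ≤ A := by
        rcases Nat.lt_or_ge A 2 with h | h
        · exfalso
          apply ha1
          have hA1' : A = 1 := by omega
          rw [hA1']
          norm_num
        · exact h
      have hA1ne : A - 1 ≠ 0 := by omega
      have hsub : ((A - 1 : ℕ) : ZMod (p ^ n)) = (A : ZMod (p ^ n)) - 1 := by
        rw [Nat.cast_sub hA1]; push_cast; ring
      have hnotdvd : ¬ p ^ n ∣ A - 1 := by
        intro h
        apply ha1
        have h0 : ((A - 1 : ℕ) : ZMod (p ^ n)) = 0 :=
          (ZMod.natCast_eq_zero_iff _ _).mpr h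
        rw [hsub] at h0
        exact sub_eq_zero.mp h0
      set e := padicValNat p (A - 1) with he
      have hen : e < n := by
        by_contra h
        exact hnotdvd (dvd_trans (pow_dvd_pow p (by omega : n ≤ e)) pow_padicValNat_dvd)
      have hdpow : (A : ZMod (p ^ n)) ^ d = 1 := (hpow d).mpr (pow_orderOf_eq_one u)
      have hdmin : ∀ k : ℕ, k ≠ 0 → (A : ZMod (p ^ n)) ^ k = 1 → d ∣ k :=
        fun k _ h => orderOf_dvd_of_pow_eq_one ((hpow k).mp h)
      by_cases he0 : e = 0
      · -- A - 1 is a unit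
        have hpd : ¬ p ∣ A - 1 := by
          intro h
          have := one_le_padicValNat_of_dvd hA1ne h
          omega
        have hunit : IsUnit ((A - 1 : ℕ) : ZMod (p ^ n)) := by
          rw [ZMod.isUnit_iff_coprime]
          exact ((hp.coprime_iff_not_dvd.mpr hpd).symm).pow_right _
        have hm0 : m = 0 := by
          have h1 : ((A - 1 : ℕ) : ZMod (p ^ n)) * m = 0 := by rw [hsub]; exact hm
          exact (hunit.mul_right_eq_zero).mp h1
        exact ⟨0, by rw [hgoal, hm0]; ring⟩
      · have he1 : 1 ≤ e := by omega
        have hpdvd : p ∣ A - 1 := dvd_of_one_le_padicValNat he1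
        rcases eq_or_ne p 2 with hp2 | hp2
        · -- p = 2
          subst hp2
          by_cases he2 : 2 ≤ e
          · -- 4 ∣ A - 1
            have h4 : 4 ∣ A - 1 := by
              have : (2 : ℕ) ^ 2 ∣ 2 ^ e := pow_dvd_pow 2 he2
              calc (4 : ℕ) = 2 ^ 2 := by norm_num
                _ ∣ 2 ^ e := this
                _ ∣ A - 1 := pow_padicValNat_dvd
            have hv1 : padicValNat 2 (A + 1) = 1 := by
              obtain ⟨t, ht⟩ := h4
              have hodd : ¬ 2 ∣ A := hpA
              have h2d : 2 ∣ A + 1 := by omega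
              have h4nd : ¬ (2 : ℕ) ^ 2 ∣ A + 1 := by
                intro hh
                have : (4 : ℕ) ∣ A + 1 := by norm_num at hh ⊢; omega
                omega
              have hle : padicValNat 2 (A + 1) ≤ 1 := by
                by_contra hh
                exact h4nd (dvd_trans (pow_dvd_pow 2 (by omega)) pow_padicValNat_dvd)
              have hge := one_le_padicValNat_of_dvd (by omega) h2d
              omega
            have hLTE : ∀ N : ℕ, N ≠ 0 → ((2 : ℕ) = 2 → Even N) →
                padicValNat 2 (A ^ N - 1) = e + padicValNat 2 N := by
              intro N hN hNe
              have h := padicValNat.pow_two_sub_pow (x := A) (y := 1) (by omega)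
                (by simpa using hpdvd) hpA hN (hNe rfl)
              simp only [one_pow, mul_one] at h
              rw [hv1, ← he] at h
              omega
            obtain ⟨x, hx⟩ := aux_norm 2 n A d e e hp hn hA2 he1 hen hdpow hdmin ha1 hLTE he
              (by omega) m hm
            exact ⟨x, by rw [hgoal]; exact hx⟩
          · -- e = 1, A ≡ 3 mod 4
            have he1' : e = 1 := by omega
            have hnd4 : ¬ (2 : ℕ) ^ 2 ∣ A - 1 := by
              intro hh
              exact he0 (by
                have := (padicValNat_dvd_iff_le (p := 2) hA1ne).mp hh
                omega)
            have h2d : 2 ∣ A - 1 := hpdvd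
            have hf4 : (2 : ℕ) ^ 2 ∣ A + 1 := by
              have : ¬ 2 ∣ A := hpA
              norm_num at hnd4 ⊢
              omega
            set f := padicValNat 2 (A + 1) with hf
            have hf2 : 2 ≤ f := (padicValNat_dvd_iff_le (by omega)).mp hf4
            have hfn : f < n := by
              by_contra hh
              have h2n : (2 : ℕ) ^ n ∣ A + 1 :=
                dvd_trans (pow_dvd_pow 2 (by omega : n ≤ f)) pow_padicValNat_dvd
              have hAneg : (A : ZMod (2 ^ n)) = -1 := by
                have h0 : ((A + 1 : ℕ) : ZMod (2 ^ n)) = 0 :=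
                  (ZMod.natCast_eq_zero_iff _ _).mpr h2n
                push_cast at h0
                exact eq_neg_of_add_eq_zero_left h0
              have hd2 : d = 2 := by
                have hsq : (A : ZMod (2 ^ n)) ^ 2 = 1 := by
                  rw [hAneg]; ring
                have hdvd2 : d ∣ 2 := hdmin 2 (by norm_num) hsq
                have hdne1 : d ≠ 1 := by
                  intro hh1
                  rw [hh1, pow_one] at hdpow
                  exact ha1 hdpow
                rcases (Nat.dvd_prime Nat.prime_two).mp hdvd2 with h | h
                · exact absurd h hdne1
                · exact h
              rcases hexc with h | h
              · exact h rfl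
              · exact h ⟨by rw [hA]; exact hAneg, hd2⟩
            have hLTE : ∀ N : ℕ, N ≠ 0 → ((2 : ℕ) = 2 → Even N) →
                padicValNat 2 (A ^ N - 1) = f + padicValNat 2 N := by
              intro N hN hNe
              have h := padicValNat.pow_two_sub_pow (x := A) (y := 1) (by omega)
                (by simpa using hpdvd) hpA hN (hNe rfl)
              simp only [one_pow, mul_one] at h
              rw [← hf, ← he, he1'] at h
              omega
            obtain ⟨x, hx⟩ := aux_norm 2 n A d e f hp hn hA2 (by omega) hfn hdpow hdmin ha1 hLTE he
              (by omega) m hm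
            exact ⟨x, by rw [hgoal]; exact hx⟩
        · -- p odd
          have hodd : Odd p := hp.odd_of_ne_two hp2
          have hLTE : ∀ N : ℕ, N ≠ 0 → (p = 2 → Even N) →
              padicValNat p (A ^ N - 1) = e + padicValNat p N := by
            intro N hN _
            have h := padicValNat.pow_sub_pow (p := p) hodd (x := A) (y := 1) (by omega)
              (by simpa using hpdvd) hpA hN
            simpa [← he] using h
          obtain ⟨x, hx⟩ := aux_norm p n A d e e hp hn hA2 he1 hen hdpow hdmin ha1 hLTE he
            (by omega) m hm
          exact ⟨x, by rw [hgoal]; exact hx⟩
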